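/- Let V be an n-dimensional vector space over the finite field F_q, and let φ_0,...,φ_{n-1} be a basis of the dual space V*. For 0 ≤ i ≤ q^n - 1 with base-q expansion i = c_0 + c_1 q + ... + c_{n-1} q^{n-1} (0 ≤ c_j ≤ q-1), define Φ_i = φ_0^{c_0} · φ_1^{c_1} ⋯ φ_{n-1}^{c_{n-1}} as a function V → F_q. Then the q^n functions Φ_i form an F_q-basis of the space of all functions from V to F_q. -/

import Mathlib

/-- digit-product extension of a dual basis gives a basis of Maps(V, F_q). -/
theorem stmt_0 (𝔽 V : Type*) [Field 𝔽] [Fintype 𝔽] [AddCommGroup V] [Module 𝔽 V]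
    [FiniteDimensional 𝔽 V] (n : ℕ) (hn : Module.finrank 𝔽 V = n)
    (b : Module.Basis (Fin n) 𝔽 (Module.Dual 𝔽 V)) :
    LinearIndependent 𝔽 (fun i : Fin (Fintype.card 𝔽 ^ n) => fun v : V =>
        ∏ j : Fin n, b j v ^ ((i : ℕ) / Fintype.card 𝔽 ^ (j : ℕ) % Fintype.card 𝔽)) ∧
    Submodule.span 𝔽 (Set.range (fun i : Fin (Fintype.card 𝔽 ^ n) => fun v : V =>
        ∏ j : Fin n, b j v ^ ((i : ℕ) / Fintype.card 𝔽 ^ (j : ℕ) % Fintype.card 𝔽))) = ⊤ := by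
  classical
  set q := Fintype.card 𝔽 with hq
  have hq1 : 1 ≤ q := Fintype.card_pos
  -- the family, re-indexed by exponent vectors
  set F : Fin (q ^ n) → V → 𝔽 := fun i => fun v : V =>
      ∏ j : Fin n, b j v ^ ((i : ℕ) / q ^ (j : ℕ) % q) with hF
  set G : (Fin n → Fin q) → V → 𝔽 := fun c => fun v : V => ∏ j : Fin n, b j v ^ (c j : ℕ) with hG
  have hFG : F = G ∘ finFunctionFinEquiv.symm := by
    funext i; rfl
  have hrange : Set.range F = Set.range G := by
    rw [hFG, Set.range_comp, Equiv.range_eq_univ, Set.image_univ]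
  -- the linear map V → (Fin n → 𝔽)
  let T : V →ₗ[𝔽] (Fin n → 𝔽) := LinearMap.pi (fun j => b j)
  have hTinj : Function.Injective T := by
    rw [← LinearMap.ker_eq_bot]
    ext v
    simp only [Submodule.mem_bot, LinearMap.mem_ker]
    constructor
    · intro h
      rw [← Module.forall_dual_apply_eq_zero_iff 𝔽]
      intro φ
      have := congrFun h
      simp only [LinearMap.pi_apply, Pi.zero_apply] at this
      have h2 : ∀ a : Fin n, b a v = 0 := this
      rw [← b.sum_repr φ]
      simp only [LinearMap.sum_apply, LinearMap.smul_apply, h2, smul_zero,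
        Finset.sum_const_zero]
    · rintro rfl; simp
  have hTsurj : Function.Surjective T :=
    (LinearMap.injective_iff_surjective_of_finrank_eq_finrank (by simp [hn])).mp hTinj
  let E := LinearEquiv.ofBijective T ⟨hTinj, hTsurj⟩
  -- span of the exponent-vector family is everything
  have hspan : Submodule.span 𝔽 (Set.range G) = ⊤ := by
    rw [Submodule.eq_top_iff']
    intro g
    -- g = h ∘ E with h : (Fin n → 𝔽) → 𝔽
    have hg : g = (g ∘ E.symm) ∘ T := by
      funext v
      simp only [Function.comp_apply]
      congr 1
      exact (E.symm_apply_apply v).symm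
    obtain ⟨p, hp, hpe⟩ : ∃ p ∈ MvPolynomial.restrictDegree (Fin n) 𝔽 (q - 1),
        MvPolynomial.evalₗ 𝔽 (Fin n) p = g ∘ E.symm := by
      have := MvPolynomial.map_restrict_dom_evalₗ 𝔽 (Fin n)
      have : (g ∘ E.symm) ∈ (MvPolynomial.restrictDegree (Fin n) 𝔽 (q - 1)).map
          (MvPolynomial.evalₗ 𝔽 (Fin n)) := by rw [this]; trivial
      simpa [Submodule.mem_map] using this
    rw [hg, ← hpe]
    rw [MvPolynomial.mem_restrictDegree] at hp
    have key : (MvPolynomial.evalₗ 𝔽 (Fin n) p) ∘ T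
        = ∑ d ∈ p.support, MvPolynomial.coeff d p •
          (fun v : V => ∏ j : Fin n, b j v ^ d j) := by
      funext v
      conv_lhs => rw [MvPolynomial.as_sum p]
      simp only [Function.comp_apply, MvPolynomial.evalₗ_apply, map_sum,
        MvPolynomial.eval_monomial, Finset.sum_apply, Pi.smul_apply, smul_eq_mul]
      refine Finset.sum_congr rfl fun d hd => ?_
      congr 1
      rw [Finsupp.prod_fintype]
      · rfl
      · intro j; exact pow_zero _
    rw [key]
    refine Submodule.sum_mem _ fun d hd => Submodule.smul_mem _ _ (Submodule.subset_span ?_)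
    refine ⟨fun j => ⟨d j, ?_⟩, rfl⟩
    have := hp d hd j
    omega
  have hspanF : Submodule.span 𝔽 (Set.range F) = ⊤ := by rw [hrange]; exact hspan
  -- linear independence via dimension count
  haveI : Fintype V := Module.fintypeOfFintype (Module.finBasis 𝔽 V)
  have hcard : Fintype.card (Fin (q ^ n)) = Module.finrank 𝔽 (V → 𝔽) := by
    rw [Module.finrank_pi, Fintype.card_fin,
      Module.card_fintype (Module.finBasis 𝔽 V), Fintype.card_fin, hn]
  exact ⟨linearIndependent_of_top_le_span_of_card_eq_finrank hspanF.ge hcard, hspanF⟩
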